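/- For every n ≥ 2 and every k, the number of permutations of length n that avoid the mesh pattern (12, {(0,0),(0,1),(1,0),(1,1)}) and have exactly k descents equals the number of permutations of length n−1 that have exactly k−1 descents. In particular, the number of permutations of length n avoiding this pattern is (n−1)! for all n ≥ 1. -/

import Mathlib

/-- 1-based position boundaries of an occurrence: `posOf x 0 = 0`,
`posOf x i = x_i` (1-based) for `1 ≤ i ≤ k`, and `posOf x i = n+1` for `i > k`. -/
def posOf {k n : ℕ} (x : Fin k → Fin n) (i : ℕ) : ℕ :=
  if h : 1 ≤ i ∧ i ≤ k then (x ⟨i - 1, by omega⟩ : ℕ) + 1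
  else if i = 0 then 0 else n + 1

/-- 1-based value boundaries of an occurrence: `valOf τ x π 0 = 0`,
`valOf τ x π j = y_j`, the `j`-th smallest of the values `π(x_1),…,π(x_k)`
(which equals `π(x_{τ⁻¹(j)})` for an occurrence of the classical pattern `τ`),
and `n+1` for `j > k`. -/
def valOf {k n : ℕ} (τ : Equiv.Perm (Fin k)) (x : Fin k → Fin n)
    (π : Equiv.Perm (Fin n)) (j : ℕ) : ℕ :=
  if h : 1 ≤ j ∧ j ≤ k then (π (x (τ.symm ⟨j - 1, by omega⟩)) : ℕ) + 1
  else if j = 0 then 0 else n + 1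

/-- `π` (a permutation of length `n`, 0-indexed via `Fin n`) contains the mesh
pattern `(τ, R)`, where boxes in `R` are given with 0-based coordinates in `[0,k]²`.
All positions/values are converted to 1-based via `+1`. -/
def MeshOccursIn {k n : ℕ} (τ : Equiv.Perm (Fin k)) (R : Set (ℕ × ℕ))
    (π : Equiv.Perm (Fin n)) : Prop :=
  ∃ x : Fin k → Fin n, StrictMono x ∧
    (∀ a b : Fin k, π (x a) < π (x b) ↔ τ a < τ b) ∧
    ∀ r ∈ R, ∀ z : Fin n,
      ¬ (posOf x r.1 < (z : ℕ) + 1 ∧ (z : ℕ) + 1 < posOf x (r.1 + 1) ∧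
         valOf τ x π r.2 < (π z : ℕ) + 1 ∧ (π z : ℕ) + 1 < valOf τ x π (r.2 + 1))

/-- `π` avoids the mesh pattern `(τ, R)`. -/
def MeshAvoids {k n : ℕ} (τ : Equiv.Perm (Fin k)) (R : Set (ℕ × ℕ))
    (π : Equiv.Perm (Fin n)) : Prop := ¬ MeshOccursIn τ R π

/-- The number of descents of `π`: indices `i` (1-based `1 ≤ i ≤ n-1`) with
`π(i) > π(i+1)`; counted here as pairs of adjacent positions. -/
def descents {n : ℕ} (π : Equiv.Perm (Fin n)) : ℕ :=
  (Finset.univ.filter fun p : Fin n × Fin n =>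
    (p.1 : ℕ) + 1 = (p.2 : ℕ) ∧ π p.2 < π p.1).card

namespace Stmt5

open Finset


open Finset

/-- number of positions before `b` holding a value smaller than `π b`. -/
def cnt {n : ℕ} (π : Equiv.Perm (Fin n)) (b : Fin n) : ℕ :=
  (Finset.univ.filter fun z : Fin n => z < b ∧ π z < π b).card

lemma cnt_le {n : ℕ} (π : Equiv.Perm (Fin n)) (b : Fin n) : cnt π b ≤ (b : ℕ) := by
  classical
  have h1 : (Finset.univ.filter fun z : Fin n => z < b ∧ π z < π b) ⊆ Finset.Iio b := by
    intro z hz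
    simp only [mem_filter] at hz
    simpa using hz.2.1
  calc cnt π b ≤ (Finset.Iio b).card := Finset.card_le_card h1
    _ = (b : ℕ) := Fin.card_Iio b

/-- `MeshAvoids` for our pattern is equivalent to: no position has exactly one
smaller element to its left. -/
lemma avoids_iff {n : ℕ} (π : Equiv.Perm (Fin n)) :
    MeshAvoids (1 : Equiv.Perm (Fin 2)) {(0,0),(0,1),(1,0),(1,1)} π ↔
      ∀ b : Fin n, cnt π b ≠ 1 := by
  constructor
  · -- avoid → cnt ≠ 1
    intro hav b hb
    apply hav
    obtain ⟨a, ha⟩ := Finset.card_eq_one.mp hb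
    have hamem : a ∈ (Finset.univ.filter fun z : Fin n => z < b ∧ π z < π b) := by
      rw [ha]; exact Finset.mem_singleton_self a
    simp only [mem_filter, mem_univ, true_and] at hamem
    obtain ⟨hab, hπab⟩ := hamem
    have honly : ∀ z : Fin n, z < b → π z < π b → z = a := by
      intro z h1 h2
      have : z ∈ (Finset.univ.filter fun z : Fin n => z < b ∧ π z < π b) := by
        simp [h1, h2]
      rw [ha] at this
      simpa using this
    refine ⟨fun i => if i = 0 then a else b, ?_, ?_, ?_⟩
    · intro i j hij
      fin_cases i <;> fin_cases j <;> simp_all <;> omega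
    · intro i j
      fin_cases i <;> fin_cases j <;>
        simp [Fin.lt_def, hπab, lt_irrefl, not_lt_of_gt hπab] <;> omega
    · intro r hr z
      rintro ⟨h1, h2, h3, h4⟩
      simp only [Set.mem_insert_iff, Set.mem_singleton_iff] at hr
      have e0 : posOf (fun i : Fin 2 => if i = 0 then a else b) 0 = 0 := by
        simp [posOf]
      have e1 : posOf (fun i : Fin 2 => if i = 0 then a else b) 1 = (a : ℕ) + 1 := by
        simp [posOf]
      have e2 : posOf (fun i : Fin 2 => if i = 0 then a else b) 2 = (b : ℕ) + 1 := by
        norm_num [posOf]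
      have f0 : valOf 1 (fun i : Fin 2 => if i = 0 then a else b) π 0 = 0 := by
        simp [valOf]
      have f1 : valOf 1 (fun i : Fin 2 => if i = 0 then a else b) π 1 = (π a : ℕ) + 1 := by
        simp [valOf, Equiv.Perm.one_symm]
      have f2 : valOf 1 (fun i : Fin 2 => if i = 0 then a else b) π 2 = (π b : ℕ) + 1 := by
        norm_num [valOf, Equiv.Perm.one_symm]
      rcases hr with h | h | h | h <;> subst h <;>
        simp only [e0, e1, e2, f0, f1, f2] at h1 h2 h3 h4
      · -- (0,0) : z < a, π z < π a
        have hz : z = a := honly z (by omega) (by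
          have : (π z : ℕ) < (π a : ℕ) := by omega
          exact lt_trans (by exact_mod_cast this) hπab)
        omega
      · -- (0,1) : z < a, π a < π z < π b
        have hz : z = a := honly z (by omega) (by exact_mod_cast (show (π z:ℕ) < π b by omega))
        omega
      · -- (1,0) : a < z < b, π z < π a
        have hz : z = a := honly z (by exact_mod_cast (show (z:ℕ) < b by omega)) (by
          exact lt_trans (show π z < π a by exact_mod_cast (show (π z:ℕ) < π a by omega)) hπab)
        omega
      · -- (1,1)
        have hz : z = a := honly z (by exact_mod_cast (show (z:ℕ) < b by omega))
          (by exact_mod_cast (show (π z:ℕ) < π b by omega))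
        omega
  · -- ¬∃ cnt = 1 → avoid
    intro h ⟨x, hmono, hord, hbox⟩
    have hab : x 0 < x 1 := hmono (by decide : (0 : Fin 2) < 1)
    have hπ : π (x 0) < π (x 1) := (hord 0 1).mpr (by decide)
    apply h (x 1)
    rw [cnt, Finset.card_eq_one]
    refine ⟨x 0, ?_⟩
    ext z
    simp only [mem_filter, mem_univ, true_and, mem_singleton]
    constructor
    · rintro ⟨h1, h2⟩
      by_contra hz
      have e1 : posOf x 1 = (x 0 : ℕ) + 1 := by simp [posOf]
      have e2 : posOf x 2 = (x 1 : ℕ) + 1 := by norm_num [posOf]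
      have e0 : posOf x 0 = 0 := by simp [posOf]
      have f0 : valOf 1 x π 0 = 0 := by simp [valOf]
      have f1 : valOf 1 x π 1 = (π (x 0) : ℕ) + 1 := by simp [valOf, Equiv.Perm.one_symm]
      have f2 : valOf 1 x π 2 = (π (x 1) : ℕ) + 1 := by norm_num [valOf, Equiv.Perm.one_symm]
      have hπz : π z ≠ π (x 0) := fun hc => hz (π.injective hc)
      -- cases on position and value of z
      rcases lt_trichotomy z (x 0) with hp | hp | hp
      · rcases lt_or_gt_of_ne (show (π z : ℕ) ≠ π (x 0) from fun hc => hπz (Fin.ext hc)) with hv | hv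
        · exact hbox (0,0) (by simp) z ⟨by simp [e0], by rw [e1]; exact_mod_cast Nat.add_lt_add_right hp 1, by simp [f0], by rw [f1]; omega⟩
        · exact hbox (0,1) (by simp) z ⟨by simp [e0], by rw [e1]; exact_mod_cast Nat.add_lt_add_right hp 1, by rw [f1]; omega, by rw [f2]; exact_mod_cast Nat.add_lt_add_right h2 1⟩
      · exact hz hp
      · rcases lt_or_gt_of_ne (show (π z : ℕ) ≠ π (x 0) from fun hc => hπz (Fin.ext hc)) with hv | hv
        · exact hbox (1,0) (by simp) z ⟨by rw [e1]; exact_mod_cast Nat.add_lt_add_right hp 1, by rw [e2]; exact_mod_cast Nat.add_lt_add_right h1 1, by simp [f0], by rw [f1]; omega⟩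
        · exact hbox (1,1) (by simp) z ⟨by rw [e1]; exact_mod_cast Nat.add_lt_add_right hp 1, by rw [e2]; exact_mod_cast Nat.add_lt_add_right h1 1, by rw [f1]; omega, by rw [f2]; exact_mod_cast Nat.add_lt_add_right h2 1⟩
    · rintro rfl
      exact ⟨hab, hπ⟩

lemma card_pairs {m : ℕ} (q : Fin (m + 1) → Fin (m + 1) → Prop) [∀ i j, Decidable (q i j)] :
    (Finset.univ.filter fun p : Fin (m + 1) × Fin (m + 1) =>
        (p.1 : ℕ) + 1 = (p.2 : ℕ) ∧ q p.1 p.2).card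
      = (Finset.univ.filter fun i : Fin m => q i.castSucc i.succ).card := by
  refine Finset.card_bij' (fun p hp => ⟨(p.1 : ℕ), ?_⟩)
    (fun i _ => (i.castSucc, i.succ)) ?_ ?_ ?_ ?_
  · simp only [Finset.mem_filter] at hp
    have := p.2.isLt
    omega
  · intro p hp
    simp only [Finset.mem_filter, Finset.mem_univ, true_and] at hp ⊢
    obtain ⟨h1, h2⟩ := hp
    have e1 : (⟨(p.1 : ℕ), by have := p.2.isLt; omega⟩ : Fin m).castSucc = p.1 :=
      Fin.ext rfl
    have e2 : (⟨(p.1 : ℕ), by have := p.2.isLt; omega⟩ : Fin m).succ = p.2 :=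
      Fin.ext (by simpa using h1)
    rw [e1, e2]
    exact h2
  · intro i hi
    simp only [Finset.mem_filter, Finset.mem_univ, true_and] at hi ⊢
    exact ⟨by simp, hi⟩
  · intro p hp
    simp only [Finset.mem_filter, Finset.mem_univ, true_and] at hp
    have : (⟨(p.1 : ℕ), by have := p.2.isLt; omega⟩ : Fin m).castSucc = p.1 := Fin.ext rfl
    ext
    · simp
    · simp only [Fin.val_succ]
      omega
  · intro i hi
    apply Fin.ext
    simp

def D {n : ℕ} (c : ∀ j : Fin n, Fin ((j : ℕ) + 1)) : ℕ :=
  (Finset.univ.filter fun p : Fin n × Fin n =>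
    (p.1 : ℕ) + 1 = (p.2 : ℕ) ∧ (c p.2 : ℕ) ≤ (c p.1 : ℕ)).card

def Di {m : ℕ} (c : ∀ j : Fin (m + 1), Fin ((j : ℕ) + 1)) : ℕ :=
  (Finset.univ.filter fun i : Fin m => (c i.succ : ℕ) ≤ (c i.castSucc : ℕ)).card

lemma D_eq_Di {m : ℕ} (c : ∀ j : Fin (m + 1), Fin ((j : ℕ) + 1)) : D c = Di c :=
  card_pairs fun i j => (c j : ℕ) ≤ (c i : ℕ)

def fsh (t : ℕ) : ℕ := if t = 0 then 0 else t - 1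
def gsh (t : ℕ) : ℕ := if t = 0 then 0 else t + 1

lemma fsh_lt {t b : ℕ} (h : t < b + 2) : fsh t < b + 1 := by unfold fsh; split <;> omega
lemma gsh_lt {t b : ℕ} (h : t < b + 1) : gsh t < b + 2 := by unfold gsh; split <;> omega

def F {m : ℕ} (c : ∀ j : Fin (m + 1), Fin ((j : ℕ) + 1)) :
    ∀ j : Fin m, Fin ((j : ℕ) + 1) :=
  fun j => ⟨fsh (c j.succ : ℕ), fsh_lt (c j.succ).isLt⟩

def G {m : ℕ} (d : ∀ j : Fin m, Fin ((j : ℕ) + 1)) :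
    ∀ j : Fin (m + 1), Fin ((j : ℕ) + 1) :=
  fun j => Fin.cases ⟨0, Nat.one_pos⟩ (fun i => ⟨gsh (d i : ℕ), gsh_lt (d i).isLt⟩) j

lemma F_apply {m : ℕ} (c : ∀ j : Fin (m + 1), Fin ((j : ℕ) + 1)) (j : Fin m) :
    (F c j : ℕ) = fsh (c j.succ : ℕ) := rfl

lemma G_zero {m : ℕ} (d : ∀ j : Fin m, Fin ((j : ℕ) + 1)) (h : 0 < m + 1) :
    (G d ⟨0, h⟩ : ℕ) = 0 := rfl

lemma G_succ {m : ℕ} (d : ∀ j : Fin m, Fin ((j : ℕ) + 1)) (i : Fin m) :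
    (G d i.succ : ℕ) = gsh (d i : ℕ) := by
  unfold G
  rw [Fin.cases_succ]

lemma G_ne_one {m : ℕ} (d : ∀ j : Fin m, Fin ((j : ℕ) + 1)) (j : Fin (m + 1)) :
    ((G d) j : ℕ) ≠ 1 := by
  induction j using Fin.cases with
  | zero =>
      have : (G d (0 : Fin (m+1)) : ℕ) = 0 := rfl
      omega
  | succ i =>
      rw [G_succ]
      unfold gsh
      split <;> omega

lemma GF {m : ℕ} (c : ∀ j : Fin (m + 1), Fin ((j : ℕ) + 1))
    (hc : ∀ j, (c j : ℕ) ≠ 1) : G (F c) = c := by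
  funext j
  apply Fin.ext
  induction j using Fin.cases with
  | zero =>
      have h1 : (c (0 : Fin (m + 1)) : ℕ) < 1 := (c 0).isLt
      have h2 : (G (F c) (0 : Fin (m+1)) : ℕ) = 0 := rfl
      omega
  | succ i =>
      rw [G_succ, F_apply]
      have h1 := hc i.succ
      rcases eq_or_ne (c i.succ : ℕ) 0 with h | h
      · simp [fsh, gsh, h]
      · rw [show fsh (c i.succ : ℕ) = (c i.succ : ℕ) - 1 from if_neg h,
            show gsh ((c i.succ : ℕ) - 1) = ((c i.succ : ℕ) - 1) + 1 from if_neg (by omega)]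
        omega

lemma FG {m : ℕ} (d : ∀ j : Fin m, Fin ((j : ℕ) + 1)) : F (G d) = d := by
  funext j
  apply Fin.ext
  rw [F_apply, G_succ]
  rcases eq_or_ne (d j : ℕ) 0 with h | h
  · simp [fsh, gsh, h]
  · rw [show gsh (d j : ℕ) = (d j : ℕ) + 1 from if_neg h,
        show fsh ((d j : ℕ) + 1) = (d j : ℕ) + 1 - 1 from if_neg (by omega)]
    omega

lemma fsh_le_fsh {t t' : ℕ} (ht : t ≠ 1) (ht' : t' ≠ 1) : fsh t' ≤ fsh t ↔ t' ≤ t := by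
  unfold fsh; split <;> split <;> omega

lemma Di_F {m : ℕ} (c : ∀ j : Fin (m + 2), Fin ((j : ℕ) + 1))
    (hc : ∀ j, (c j : ℕ) ≠ 1) : Di (m := m + 1) c = Di (m := m) (F c) + 1 := by
  classical
  unfold Di
  have h0mem : (⟨0, by omega⟩ : Fin (m + 1)) ∈
      Finset.univ.filter (fun i : Fin (m + 1) => (c i.succ : ℕ) ≤ (c i.castSucc : ℕ)) := by
    simp only [Finset.mem_filter, Finset.mem_univ, true_and]
    have h1 : (c (⟨0, by omega⟩ : Fin (m + 1)).succ : ℕ) < 2 :=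
      (c (⟨0, by omega⟩ : Fin (m + 1)).succ).isLt
    have h2 : (c (⟨0, by omega⟩ : Fin (m + 1)).succ : ℕ) ≠ 1 :=
      hc (⟨0, by omega⟩ : Fin (m + 1)).succ
    omega
  rw [← Finset.card_erase_add_one h0mem]
  congr 1
  refine Finset.card_bij' (fun a ha => (⟨(a : ℕ) - 1, ?_⟩ : Fin m))
    (fun i _ => i.succ) ?_ ?_ ?_ ?_
  · rw [Finset.mem_erase] at ha
    have h1 : (a : ℕ) ≠ 0 := fun h => ha.1 (Fin.ext h)
    have := a.isLt
    omega
  · intro a ha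
    rw [Finset.mem_erase] at ha
    obtain ⟨hne, hmem⟩ := ha
    have h1 : (a : ℕ) ≠ 0 := fun h => hne (Fin.ext h)
    simp only [Finset.mem_filter, Finset.mem_univ, true_and] at hmem ⊢
    have e1 : (⟨(a : ℕ) - 1, by have := a.isLt; omega⟩ : Fin m).succ.succ = a.succ := by
      apply Fin.ext; simp only [Fin.val_succ]; omega
    have e2 : (⟨(a : ℕ) - 1, by have := a.isLt; omega⟩ : Fin m).castSucc.succ = a.castSucc := by
      apply Fin.ext; simp only [Fin.val_succ, Fin.coe_castSucc]; omega
    rw [F_apply, F_apply, e1, e2]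
    rw [fsh_le_fsh (hc _) (hc _)]
    exact hmem
  · intro i hi
    simp only [Finset.mem_filter, Finset.mem_univ, true_and] at hi
    rw [Finset.mem_erase]
    constructor
    · intro h
      have : (i.succ : ℕ) = 0 := congrArg Fin.val h
      simp at this
    · simp only [Finset.mem_filter, Finset.mem_univ, true_and]
      rw [F_apply, F_apply] at hi
      have e3 : i.succ.castSucc = i.castSucc.succ := Fin.ext rfl
      rw [e3]
      rwa [fsh_le_fsh (hc _) (hc _)] at hi
  · intro a ha
    rw [Finset.mem_erase] at ha
    have h1 : (a : ℕ) ≠ 0 := fun h => ha.1 (Fin.ext h)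
    apply Fin.ext
    simp only [Fin.val_succ]
    omega
  · intro i _
    apply Fin.ext
    simp

lemma card_val_lt {n : ℕ} (π : Equiv.Perm (Fin n)) (t : Fin n) :
    (Finset.univ.filter fun z : Fin n => π z < t).card = (t : ℕ) := by
  rw [← Fin.card_Iio t]
  apply Finset.card_bij (fun z _ => π z)
  · intro a ha; simp only [mem_filter] at ha; simpa using ha.2
  · intro a _ b _ hab; exact π.injective hab
  · intro w hw; exact ⟨π.symm w, by simp [Finset.mem_Iio.mp hw], by simp⟩

lemma split_le {n : ℕ} (π : Equiv.Perm (Fin n)) (j : Fin n) (v : Fin n) :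
    (Finset.univ.filter fun z : Fin n => z ≤ j ∧ π z < v).card
      + (Finset.univ.filter fun z : Fin n => j < z ∧ π z < v).card = (v : ℕ) := by
  classical
  rw [← card_val_lt π v, ← Finset.card_union_of_disjoint, ← Finset.filter_or]
  · congr 1
    ext z
    simp only [mem_filter, mem_univ, true_and]
    constructor
    · rintro (⟨_, h⟩ | ⟨_, h⟩) <;> exact h
    · intro h
      rcases le_or_gt z j with hz | hz
      · exact Or.inl ⟨hz, h⟩
      · exact Or.inr ⟨hz, h⟩
  · rw [Finset.disjoint_filter]
    rintro z _ ⟨h1, _⟩ ⟨h2, _⟩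
    exact absurd h2 (not_lt_of_ge h1)

lemma cnt_eq_le_card {n : ℕ} (π : Equiv.Perm (Fin n)) (j : Fin n) :
    cnt π j = (Finset.univ.filter fun z : Fin n => z ≤ j ∧ π z < π j).card := by
  unfold cnt
  congr 1
  ext z
  simp only [mem_filter, mem_univ, true_and]
  constructor
  · rintro ⟨h1, h2⟩; exact ⟨le_of_lt h1, h2⟩
  · rintro ⟨h1, h2⟩
    refine ⟨lt_of_le_of_ne h1 ?_, h2⟩
    rintro rfl
    exact absurd h2 (lt_irrefl _)

lemma cnt_inj_aux {n : ℕ} (π π' : Equiv.Perm (Fin n)) (j : Fin n)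
    (hsuf : ∀ i : Fin n, j < i → π i = π' i) (hlt : π j < π' j) :
    cnt π j ≠ cnt π' j := by
  classical
  have hfilter : ∀ v : Fin n,
      (Finset.univ.filter fun z : Fin n => j < z ∧ π z < v)
        = (Finset.univ.filter fun z : Fin n => j < z ∧ π' z < v) := by
    intro v
    ext z
    simp only [mem_filter, mem_univ, true_and]
    constructor
    · rintro ⟨h1, h2⟩; exact ⟨h1, by rwa [← hsuf z h1]⟩
    · rintro ⟨h1, h2⟩; exact ⟨h1, by rwa [hsuf z h1]⟩
  have hg : ∀ v : Fin n,
      (Finset.univ.filter fun z : Fin n => z ≤ j ∧ π z < v).card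
        = (Finset.univ.filter fun z : Fin n => z ≤ j ∧ π' z < v).card := by
    intro v
    have h1 := split_le π j v
    have h2 := split_le π' j v
    rw [hfilter v] at h1
    omega
  have hmono :
      (Finset.univ.filter fun z : Fin n => z ≤ j ∧ π z < π j).card
        < (Finset.univ.filter fun z : Fin n => z ≤ j ∧ π z < π' j).card := by
    have hsub : insert j (Finset.univ.filter fun z : Fin n => z ≤ j ∧ π z < π j)
        ⊆ (Finset.univ.filter fun z : Fin n => z ≤ j ∧ π z < π' j) := by
      intro z hz
      rcases Finset.mem_insert.mp hz with rfl | hz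
      · simp [hlt]
      · simp only [mem_filter, mem_univ, true_and] at hz ⊢
        exact ⟨hz.1, lt_trans hz.2 hlt⟩
    have hnotmem : j ∉ (Finset.univ.filter fun z : Fin n => z ≤ j ∧ π z < π j) := by
      simp
    calc (Finset.univ.filter fun z : Fin n => z ≤ j ∧ π z < π j).card
        < (insert j (Finset.univ.filter fun z : Fin n => z ≤ j ∧ π z < π j)).card := by
          rw [Finset.card_insert_of_notMem hnotmem]; omega
      _ ≤ _ := Finset.card_le_card hsub
  rw [cnt_eq_le_card, cnt_eq_le_card]
  rw [← hg (π' j)]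
  omega

lemma cnt_inj {n : ℕ} {π π' : Equiv.Perm (Fin n)}
    (h : ∀ b : Fin n, cnt π b = cnt π' b) : π = π' := by
  classical
  by_contra hne
  have hex : ∃ i : Fin n, π i ≠ π' i := by
    by_contra hc
    push_neg at hc
    exact hne (Equiv.ext hc)
  set S : Finset (Fin n) := Finset.univ.filter fun i => π i ≠ π' i with hS
  have hSne : S.Nonempty := by
    obtain ⟨i, hi⟩ := hex
    exact ⟨i, by simp [hS, hi]⟩
  set j := S.max' hSne with hj
  have hjS : j ∈ S := S.max'_mem hSne
  have hjne : π j ≠ π' j := by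
    simp only [hS, mem_filter] at hjS
    exact hjS.2
  have hsuf : ∀ i : Fin n, j < i → π i = π' i := by
    intro i hi
    by_contra hc
    have : i ∈ S := by simp [hS, hc]
    exact absurd (S.le_max' i this) (not_le_of_gt hi)
  rcases lt_or_gt_of_ne hjne with hlt | hlt
  · exact cnt_inj_aux π π' j hsuf hlt (h j)
  · exact cnt_inj_aux π' π j (fun i hi => (hsuf i hi).symm) hlt (h j).symm

def code {n : ℕ} (π : Equiv.Perm (Fin n)) : ∀ j : Fin n, Fin ((j : ℕ) + 1) :=
  fun j => ⟨cnt π j, Nat.lt_succ_of_le (cnt_le π j)⟩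

lemma code_bijective {n : ℕ} : Function.Bijective (code (n := n)) := by
  rw [Fintype.bijective_iff_injective_and_card]
  constructor
  · intro π π' h
    apply cnt_inj
    intro b
    have := congrFun h b
    simpa [code, Fin.ext_iff] using this
  · rw [Fintype.card_pi, Fintype.card_perm, Fintype.card_fin]
    simp only [Fintype.card_fin]
    rw [Fin.prod_univ_eq_prod_range (fun i => i + 1)]
    exact (Finset.prod_range_add_one_eq_factorial n).symm

/-- codeEquiv -/
noncomputable def codeEquiv {n : ℕ} : Equiv.Perm (Fin n) ≃ (∀ j : Fin n, Fin ((j : ℕ) + 1)) :=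
  Equiv.ofBijective code code_bijective

lemma descent_iff {n : ℕ} (π : Equiv.Perm (Fin n)) (i i' : Fin n)
    (h : (i : ℕ) + 1 = (i' : ℕ)) : π i' < π i ↔ cnt π i' ≤ cnt π i := by
  classical
  have hii' : i < i' := by rw [Fin.lt_def]; omega
  have key1 : π i' < π i → cnt π i' ≤ cnt π i := by
    intro hd
    apply Finset.card_le_card
    intro z hz
    simp only [mem_filter, mem_univ, true_and] at hz ⊢
    obtain ⟨h1, h2⟩ := hz
    have hzi : z ≠ i := by
      rintro rfl
      exact absurd (lt_trans h2 hd) (lt_irrefl _)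
    refine ⟨?_, lt_trans h2 hd⟩
    rw [Fin.lt_def] at h1 ⊢
    have := Fin.val_ne_of_ne hzi
    omega
  have key2 : π i < π i' → cnt π i + 1 ≤ cnt π i' := by
    intro hd
    have hsub : insert i (Finset.univ.filter fun z : Fin n => z < i ∧ π z < π i)
        ⊆ (Finset.univ.filter fun z : Fin n => z < i' ∧ π z < π i') := by
      intro z hz
      rcases Finset.mem_insert.mp hz with rfl | hz
      · simp [hii', hd]
      · simp only [mem_filter, mem_univ, true_and] at hz ⊢
        exact ⟨lt_trans hz.1 hii', lt_trans hz.2 hd⟩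
    have hnotmem : i ∉ (Finset.univ.filter fun z : Fin n => z < i ∧ π z < π i) := by simp
    calc cnt π i + 1
        = (insert i (Finset.univ.filter fun z : Fin n => z < i ∧ π z < π i)).card := by
          rw [Finset.card_insert_of_notMem hnotmem]; rfl
      _ ≤ _ := Finset.card_le_card hsub
  constructor
  · exact key1
  · intro hc
    rcases lt_trichotomy (π i') (π i) with h1 | h1 | h1
    · exact h1
    · exact absurd (π.injective h1) (by rintro rfl; omega)
    · exact absurd (key2 h1) (by omega)

lemma descents_eq_D {n : ℕ} (π : Equiv.Perm (Fin n)) : descents π = D (code π) := by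
  unfold descents D
  apply congrArg Finset.card
  ext p
  simp only [mem_filter, mem_univ, true_and]
  simp only [code]
  constructor
  · rintro ⟨h1, h2⟩; exact ⟨h1, (descent_iff π p.1 p.2 h1).mp h2⟩
  · rintro ⟨h1, h2⟩; exact ⟨h1, (descent_iff π p.1 p.2 h1).mpr h2⟩

lemma card_ne_one (t : ℕ) :
    Fintype.card {v : Fin (t + 1) // (v : ℕ) ≠ 1} = if t = 0 then 1 else t := by
  rw [Fintype.card_subtype]
  rcases Nat.eq_zero_or_pos t with rfl | ht
  · decide
  · rw [if_neg (by omega)]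
    have hcong : (Finset.univ.filter fun v : Fin (t + 1) => (v : ℕ) ≠ 1)
        = Finset.univ.filter fun v : Fin (t + 1) => v ≠ (⟨1, by omega⟩ : Fin (t + 1)) := by
      apply Finset.filter_congr
      intro v _
      constructor
      · intro h hc; exact h (congrArg Fin.val hc)
      · intro h hc; exact h (Fin.ext hc)
    rw [hcong, Finset.filter_ne', Finset.card_erase_of_mem (Finset.mem_univ _)]
    simp

lemma prod_fact (n : ℕ) (hn : 1 ≤ n) :
    (∏ i ∈ Finset.range n, (if i = 0 then 1 else i)) = (n - 1).factorial := by
  induction n with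
  | zero => omega
  | succ m ih =>
    rcases Nat.eq_zero_or_pos m with rfl | hm
    · simp
    · rw [Finset.prod_range_succ, ih hm, if_neg (by omega)]
      simp only [Nat.succ_sub_one]
      rw [mul_comm]
      exact Nat.mul_factorial_pred hm.ne'

lemma card_codes (n : ℕ) (hn : 1 ≤ n) :
    Nat.card {c : ∀ j : Fin n, Fin ((j : ℕ) + 1) // ∀ j, (c j : ℕ) ≠ 1}
      = (n - 1).factorial := by
  rw [Nat.card_congr
    (Equiv.subtypePiEquivPi (p := fun (j : Fin n) (v : Fin ((j : ℕ) + 1)) => (v : ℕ) ≠ 1))]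
  rw [Nat.card_eq_fintype_card, Fintype.card_pi]
  calc ∏ j : Fin n, Fintype.card {v : Fin ((j : ℕ) + 1) // (v : ℕ) ≠ 1}
      = ∏ j : Fin n, (if (j : ℕ) = 0 then 1 else (j : ℕ)) :=
        Finset.prod_congr rfl fun j _ => card_ne_one j
    _ = ∏ i ∈ Finset.range n, (if i = 0 then 1 else i) :=
        Fin.prod_univ_eq_prod_range (fun i => if i = 0 then 1 else i) n
    _ = (n - 1).factorial := prod_fact n hn


def shiftEquiv (m k : ℕ) :
    {c : ∀ j : Fin (m + 2), Fin ((j : ℕ) + 1) // (∀ j, (c j : ℕ) ≠ 1) ∧ D c = k}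
      ≃ {d : ∀ j : Fin (m + 1), Fin ((j : ℕ) + 1) // D d + 1 = k} where
  toFun c := ⟨F c.1, by
    have h := Di_F c.1 c.2.1
    have h2 := c.2.2
    rw [D_eq_Di] at h2 ⊢
    omega⟩
  invFun d := ⟨G d.1, ⟨G_ne_one d.1, by
    have h := Di_F (G d.1) (G_ne_one d.1)
    rw [FG] at h
    have h2 := d.2
    rw [D_eq_Di] at h2 ⊢
    omega⟩⟩
  left_inv c := Subtype.ext (GF c.1 c.2.1)
  right_inv d := Subtype.ext (FG d.1)


end Stmt5

/-- For `n ≥ 2` and every `k`, the number of permutations of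
length `n` avoiding `(12, {(0,0),(0,1),(1,0),(1,1)})` with exactly `k` descents equals the number of
permutations of length `n-1` with exactly `k-1` descents (stated as
`descents σ + 1 = k`, so that `k = 0` gives the empty count on both sides).
In particular the number of avoiders of length `n ≥ 1` is `(n-1)!`. -/
theorem stmt5 :
    (∀ n : ℕ, 2 ≤ n → ∀ k : ℕ,
      Nat.card {π : Equiv.Perm (Fin n) //
        MeshAvoids (1 : Equiv.Perm (Fin 2)) {(0,0),(0,1),(1,0),(1,1)} π ∧ descents π = k} =
      Nat.card {σ : Equiv.Perm (Fin (n - 1)) // descents σ + 1 = k}) ∧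
    ∀ n : ℕ, 1 ≤ n →
      Nat.card {π : Equiv.Perm (Fin n) //
        MeshAvoids (1 : Equiv.Perm (Fin 2)) {(0,0),(0,1),(1,0),(1,1)} π} = (n - 1).factorial := by
  constructor
  · intro n hn k
    obtain ⟨m, rfl⟩ : ∃ m, n = m + 2 := ⟨n - 2, by omega⟩
    refine Nat.card_congr ?_
    refine (Equiv.subtypeEquiv Stmt5.codeEquiv fun π => ?_).trans
      ((Stmt5.shiftEquiv m k).trans
        (Equiv.subtypeEquiv Stmt5.codeEquiv fun σ => ?_).symm)
    · rw [Stmt5.avoids_iff, Stmt5.descents_eq_D]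
      exact Iff.rfl
    · rw [Stmt5.descents_eq_D]
      exact Iff.rfl
  · intro n hn
    have e : {π : Equiv.Perm (Fin n) //
        MeshAvoids (1 : Equiv.Perm (Fin 2)) {(0,0),(0,1),(1,0),(1,1)} π}
        ≃ {c : ∀ j : Fin n, Fin ((j : ℕ) + 1) // ∀ j, (c j : ℕ) ≠ 1} :=
      Equiv.subtypeEquiv Stmt5.codeEquiv fun π => by
        rw [Stmt5.avoids_iff]; exact Iff.rfl
    rw [Nat.card_congr e]
    exact Stmt5.card_codes n hn
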